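/- arXiv:2507.20597 — 3 statements merged into one kernel-verified Lean document; each statement's English description precedes it below -/
import Mathlib

section
/- For a C¹ diffeomorphism f : Y → X with positive Jacobian, and h = f⁻¹, the distortions satisfy K_h(x) = K_f(h(x)) for all x ∈ X, and consequently ∫_Y K_f^p(y) dy = (1/2)∫_X K_h^{p-1}(x)·‖Dh(x)‖² dx. -/
open MeasureTheory Complex

noncomputable def wirtingerZ (D : ℂ →L[ℝ] ℂ) : ℂ := (D 1 - Complex.I * D Complex.I) / 2

noncomputable def wirtingerZbar (D : ℂ →L[ℝ] ℂ) : ℂ := (D 1 + Complex.I * D Complex.I) / 2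

noncomputable def jacW (D : ℂ →L[ℝ] ℂ) : ℝ :=
  ‖wirtingerZ D‖^2 - ‖wirtingerZbar D‖^2

/-- The squared Hilbert–Schmidt norm `‖D‖² = 2(|f_z|² + |f_z̄|²)`. -/
noncomputable def hsSq (D : ℂ →L[ℝ] ℂ) : ℝ :=
  2 * (‖wirtingerZ D‖^2 + ‖wirtingerZbar D‖^2)

noncomputable def distortion (D : ℂ →L[ℝ] ℂ) : ℝ :=
  if 0 < jacW D then hsSq D / (2 * jacW D) else 1

lemma apply_wirtinger (D : ℂ →L[ℝ] ℂ) (w : ℂ) :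
    D w = wirtingerZ D * w + wirtingerZbar D * (starRingEnd ℂ) w := by
  have key : ∀ r i : ℝ, D ((r : ℂ) + (i:ℂ) * Complex.I)
      = wirtingerZ D * ((r:ℂ) + i * Complex.I) + wirtingerZbar D * ((r:ℂ) - i * Complex.I) := by
    intro r i
    have h1 : (r : ℂ) + (i:ℂ) * Complex.I = r • (1:ℂ) + i • Complex.I := by
      simp [Complex.real_smul]
    rw [h1, map_add, D.map_smul, D.map_smul]
    simp only [Complex.real_smul]
    unfold wirtingerZ wirtingerZbar
    linear_combination ((i:ℂ) * D Complex.I) * Complex.I_mul_I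
  have hc : (starRingEnd ℂ) w = (w.re : ℂ) - (w.im : ℂ) * Complex.I := by
    simp [Complex.ext_iff]
  calc D w = D ((w.re:ℂ) + (w.im:ℂ) * Complex.I) := by rw [Complex.re_add_im]
    _ = _ := by rw [key w.re w.im, hc, Complex.re_add_im]

lemma jacW_eq (D : ℂ →L[ℝ] ℂ) :
    jacW D = Complex.normSq (wirtingerZ D) - Complex.normSq (wirtingerZbar D) := by
  simp [jacW, Complex.sq_norm]

lemma clm_det (D : ℂ →L[ℝ] ℂ) : D.det = jacW D := by
  have h1 : D.det = (D 1).re * (D Complex.I).im - (D Complex.I).re * (D 1).im := by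
    rw [ContinuousLinearMap.det, ← LinearMap.det_toMatrix Complex.basisOneI,
      Matrix.det_fin_two]
    simp [LinearMap.toMatrix_apply, Complex.coe_basisOneI_repr, Complex.coe_basisOneI]
  rw [h1, jacW_eq]
  unfold wirtingerZ wirtingerZbar
  simp [Complex.normSq_apply]
  ring

lemma hsSq_pos {D : ℂ →L[ℝ] ℂ} (hJ : 0 < jacW D) : 0 < hsSq D := by
  rw [jacW_eq] at hJ
  unfold hsSq
  simp only [Complex.sq_norm]
  nlinarith [Complex.normSq_nonneg (wirtingerZbar D)]

lemma distortion_pos {D : ℂ →L[ℝ] ℂ} (hJ : 0 < jacW D) : 0 < distortion D := by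
  unfold distortion
  rw [if_pos hJ]
  exact div_pos (hsSq_pos hJ) (by linarith)

lemma distortion_inv {A B : ℂ →L[ℝ] ℂ} (hAB : A.comp B = ContinuousLinearMap.id ℝ ℂ)
    (hJB : 0 < jacW B) : distortion A = distortion B := by
  set a := wirtingerZ A with ha'
  set b := wirtingerZbar A with hb'
  set c := wirtingerZ B with hc'
  set d := wirtingerZbar B with hd'
  have hB1 : B 1 = c + d := by rw [apply_wirtinger B 1]; simp; rfl
  have hBI : B Complex.I = (c - d) * Complex.I := by
    rw [apply_wirtinger B Complex.I]; simp [Complex.conj_I]; ring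
  have h1 : A (B 1) = 1 := by
    have := DFunLike.congr_fun hAB (1 : ℂ); simpa using this
  have hI : A (B Complex.I) = Complex.I := by
    have := DFunLike.congr_fun hAB (Complex.I : ℂ); simpa using this
  rw [hB1, apply_wirtinger A] at h1
  rw [hBI, apply_wirtinger A] at hI
  simp only [map_add, map_mul, map_sub, Complex.conj_I] at h1 hI
  set c' := (starRingEnd ℂ) c with hcc
  set d' := (starRingEnd ℂ) d
  have hst : Complex.I * ((a*c + b*d' - 1) - (a*d + b*c')) = 0 := by
    linear_combination hI
  have hsub : (a*c + b*d' - 1) - (a*d + b*c') = 0 := by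
    rcases mul_eq_zero.mp hst with h | h
    · exact absurd h Complex.I_ne_zero
    · exact h
  have hsum : (a*c + b*d' - 1) + (a*d + b*c') = 0 := by linear_combination h1
  have e1 : a*c + b*d' = 1 := by linear_combination (hsum + hsub) / 2
  have e2 : a*d + b*c' = 0 := by linear_combination (hsum - hsub) / 2
  have ha : a * ((Complex.normSq c : ℂ) - Complex.normSq d) = c' := by
    rw [← Complex.mul_conj, ← Complex.mul_conj]
    linear_combination c' * e1 - d' * e2
  have hb : b * ((Complex.normSq c : ℂ) - Complex.normSq d) = -d := by
    rw [← Complex.mul_conj, ← Complex.mul_conj]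
    linear_combination c * e2 - d * e1
  set J : ℝ := Complex.normSq c - Complex.normSq d with hJ'
  have hJpos : 0 < J := by rw [hJ']; rw [jacW_eq] at hJB; exact hJB
  have hJne : J ≠ 0 := ne_of_gt hJpos
  have hcast : ((Complex.normSq c : ℂ) - Complex.normSq d) = (J : ℂ) := by push_cast [hJ']; ring
  rw [hcast] at ha hb
  have hna : Complex.normSq a * J^2 = Complex.normSq c := by
    have := congrArg Complex.normSq ha
    rw [hcc] at this
    simpa [Complex.normSq_mul, Complex.normSq_conj, sq, Complex.normSq_ofReal] using this
  have hnb : Complex.normSq b * J^2 = Complex.normSq d := by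
    have := congrArg Complex.normSq hb
    simpa [Complex.normSq_mul, sq, Complex.normSq_ofReal] using this
  have hJA : jacW A = 1 / J := by
    rw [jacW_eq]
    field_simp
    nlinarith [hna, hnb]
  have hJApos : 0 < jacW A := by rw [hJA]; positivity
  unfold distortion
  rw [if_pos hJApos, if_pos hJB]
  unfold hsSq
  rw [← ha', ← hb', ← hc', ← hd']
  simp only [Complex.sq_norm]
  rw [jacW_eq, jacW_eq, ← ha', ← hb', ← hc', ← hd', ← hJ']
  have h2 : Complex.normSq a = Complex.normSq c / J^2 := by field_simp; linarith [hna]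
  have h3 : Complex.normSq b = Complex.normSq d / J^2 := by field_simp; linarith [hnb]
  rw [h2, h3]
  field_simp
  rw [← hJ']; field_simp

/-- Identity (1.7): for a `C¹` diffeomorphism `f : Y → X` with positive Jacobian and inverse
`h = f⁻¹`, the distortions satisfy `K_h(x) = K_f(h(x))` on `X`, and consequently
`∫_Y K_f^p = (1/2)∫_X K_h^{p-1}·‖Dh‖²`, i.e. `E_p[f] = 𝔼_p[h]`. -/
theorem distortion_of_inverse_and_energy_identity
    (X Y : Set ℂ) (hXo : IsOpen X) (hYo : IsOpen Y)
    (hXb : Bornology.IsBounded X) (hYb : Bornology.IsBounded Y)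
    (p : ℝ) (hp : 1 ≤ p)
    (f h : ℂ → ℂ) (Df Dh : ℂ → ℂ →L[ℝ] ℂ)
    (hf : ∀ y ∈ Y, HasFDerivAt f (Df y) y) (hfJ : ∀ y ∈ Y, 0 < jacW (Df y))
    (hh : ∀ x ∈ X, HasFDerivAt h (Dh x) x) (hhJ : ∀ x ∈ X, 0 < jacW (Dh x))
    (hfbij : Set.BijOn f Y X) (hinv : Set.InvOn h f Y X) :
    (∀ x ∈ X, distortion (Dh x) = distortion (Df (h x))) ∧
    (∫ y in Y, distortion (Df y) ^ p
      = (1 / 2) * ∫ x in X, distortion (Dh x) ^ (p - 1) * hsSq (Dh x)) := by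
  have hhbij : Set.BijOn h X Y := Set.BijOn.symm hinv.symm hfbij
  have key : ∀ x ∈ X, distortion (Dh x) = distortion (Df (h x)) := by
    intro x hx
    have hxY : h x ∈ Y := hhbij.mapsTo hx
    have hcomp : HasFDerivAt (f ∘ h) ((Df (h x)).comp (Dh x)) x :=
      (hf _ hxY).comp x (hh x hx)
    have hev : f ∘ h =ᶠ[nhds x] id :=
      Filter.eventuallyEq_of_mem (hXo.mem_nhds hx) (fun y hy => hinv.2 hy)
    have hid : HasFDerivAt id ((Df (h x)).comp (Dh x)) x :=
      hcomp.congr_of_eventuallyEq hev.symm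
    have hAB : (Df (h x)).comp (Dh x) = ContinuousLinearMap.id ℝ ℂ :=
      hid.unique (hasFDerivAt_id x)
    exact (distortion_inv hAB (hhJ x hx)).symm
  refine ⟨key, ?_⟩
  have himg : h '' X = Y := hhbij.image_eq
  rw [← himg,
    integral_image_eq_integral_abs_det_fderiv_smul volume hXo.measurableSet
      (fun x hx => (hh x hx).hasFDerivWithinAt) hhbij.injOn,
    ← integral_const_mul]
  refine setIntegral_congr_fun hXo.measurableSet (fun x hx => ?_)
  have hJ : 0 < jacW (Dh x) := hhJ x hx
  have hK : 0 < distortion (Dh x) := distortion_pos hJ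
  have hdet : |(Dh x).det| = jacW (Dh x) := by
    rw [clm_det]; exact abs_of_pos hJ
  rw [smul_eq_mul, hdet, ← key x hx]
  have hpow : distortion (Dh x) ^ p = distortion (Dh x) ^ (p - 1) * distortion (Dh x) := by
    nth_rewrite 1 [show p = (p - 1) + 1 by ring]
    rw [Real.rpow_add hK, Real.rpow_one]
  rw [hpow]
  have hJK : jacW (Dh x) * distortion (Dh x) = hsSq (Dh x) / 2 := by
    unfold distortion
    rw [if_pos hJ]
    field_simp
  linear_combination (distortion (Dh x) ^ (p - 1)) * hJK
end

section
/- Energy difference lower bound: under the identity E^Φ_X[H] - E^Φ_X[h] = 4∫_X [|f_z - γ f_{z̄}|²/(|f_z|²-|f_{z̄}|²) - 1]·Φ(h)|h_z h_{z̄}| + 4∫_X Φ(h)·(|h_z|-|h_{z̄}|)²|f_{z̄}|²/(|f_z|²-|f_{z̄}|²), if additionally ∫_X (|∂_v f|²/J_f)·|φ| ≥ ∫_X |φ| where φ = Φ(h)h_z·conj(h_{z̄}) is holomorphic and |φ| = Φ(h)|h_z h_{z̄}|, then E^Φ_X[H] ≥ E^Φ_X[h]. -/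
open MeasureTheory Complex

/-- Energy difference lower bound: under the integral identity for
`E^Φ_X[H] - E^Φ_X[h]` and the trajectory estimate
`∫_X (|∂_v f|²/J_f)·|φ| ≥ ∫_X |φ|`, where `φ = Φ(h) h_z conj(h_z̄)` and
`|φ| = Φ(h)|h_z h_z̄|`, one concludes `E^Φ_X[H] ≥ E^Φ_X[h]`. -/
theorem energy_difference_lower_bound
    (X : Set ℂ) (hX : MeasurableSet X)
    (Φh : ℂ → ℝ) (hΦ : ∀ z ∈ X, 0 < Φh z)
    (hz hzb fz fzb φ γ : ℂ → ℂ) (Jf : ℂ → ℝ)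
    (hJf : ∀ z ∈ X, Jf z = (‖fz z‖)^2 - (‖fzb z‖)^2)
    (hJpos : ∀ z ∈ X, 0 < Jf z)
    (hγ : ∀ z ∈ X, γ z = if hz z * hzb z = 0 then 0
      else hz z * (starRingEnd ℂ) (hzb z)
        / ((‖hz z * (starRingEnd ℂ) (hzb z)‖ : ℝ) : ℂ))
    (hφ : ∀ z ∈ X, φ z = (Φh z : ℂ) * hz z * (starRingEnd ℂ) (hzb z))
    (EH Eh : ℝ)
    (hident : EH - Eh
      = 4 * (∫ z in X, ((‖fz z - γ z * fzb z‖)^2 / Jf z - 1)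
              * (Φh z * ‖hz z * hzb z‖))
        + 4 * (∫ z in X, Φh z * ((‖hz z‖ - ‖hzb z‖)^2
              * (‖fzb z‖)^2 / Jf z)))
    (hint1 : IntegrableOn
      (fun z => (‖fz z - γ z * fzb z‖)^2 / Jf z * ‖φ z‖) X)
    (hint2 : IntegrableOn (fun z => ‖φ z‖) X)
    (hineq : ∫ z in X, ‖φ z‖
      ≤ ∫ z in X, (‖fz z - γ z * fzb z‖)^2 / Jf z * ‖φ z‖) :
    Eh ≤ EH := by
  have habs : ∀ z ∈ X, ‖φ z‖ = Φh z * ‖hz z * hzb z‖ := by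
    intro z hzX
    rw [hφ z hzX]
    simp [norm_mul, Complex.norm_real, abs_of_pos (hΦ z hzX), mul_assoc]
  have h1 : ∫ z in X, ((‖fz z - γ z * fzb z‖)^2 / Jf z - 1)
        * (Φh z * ‖hz z * hzb z‖)
      = (∫ z in X, (‖fz z - γ z * fzb z‖)^2 / Jf z * ‖φ z‖)
        - ∫ z in X, ‖φ z‖ := by
    rw [← integral_sub hint1 hint2]
    apply setIntegral_congr_fun hX
    intro z hzX
    simp only
    rw [habs z hzX]
    ring
  have h2 : 0 ≤ ∫ z in X, Φh z * ((‖hz z‖ - ‖hzb z‖)^2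
      * (‖fzb z‖)^2 / Jf z) := by
    apply setIntegral_nonneg hX
    intro z hzX
    have := (hJpos z hzX).le
    have := (hΦ z hzX).le
    positivity
  have h3 : 0 ≤ ∫ z in X, ((‖fz z - γ z * fzb z‖)^2 / Jf z - 1)
      * (Φh z * ‖hz z * hzb z‖) := by
    rw [h1]; linarith
  linarith
end

section
/- If f and f̃ are both minimizers of the L^p-mean distortion E_p over Diff^p_{f_0}(Y̅, X̅) (p > 1), and h = f⁻¹ is the unique minimizer of the auxiliary Φ-weighted Dirichlet energy E^Φ_X with Φ = K_f^{p-1}, then from E^Φ_X[h] ≤ E^Φ_X[h̃] ≤ E_p[f]^{(p-1)/p}·E_p[f̃]^{1/p} = E_p[f] = E^Φ_X[h] it follows that h̃ = h, hence f̃ = f. -/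
open MeasureTheory

/-- Uniqueness of the diffeomorphic minimizer (Theorem 1.2, final argument): if `f` and `f̃`
are both minimizers of the `L^p`-mean distortion (`E_p[f] = E_p[f̃]`, both positive), `h = f⁻¹`
is a minimizer of the auxiliary `Φ`-weighted Dirichlet energy `E^Φ_X` on the class `S`, whose
minimizer is unique (any `g ∈ S` with `E^Φ_X[g] = E^Φ_X[h]` agrees with `h` on `X`), `h̃ = f̃⁻¹`
lies in `S`, the comparison `E^Φ_X[h̃] ≤ E_p[f]^{(p-1)/p}·E_p[f̃]^{1/p}` holds, and
`E^Φ_X[h] = E_p[f]`, then `h̃ = h` on `X`, hence `f̃ = f` on `Y`. -/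
theorem unique_minimizer_final_argument
    (X Y : Set ℂ) (p : ℝ) (hp : 1 < p)
    (f ftil h htil : ℂ → ℂ)
    (S : Set (ℂ → ℂ))
    (EΦ : (ℂ → ℂ) → ℝ) (Ep : (ℂ → ℂ) → ℝ)
    (hfmaps : Set.MapsTo f Y X) (hftilmaps : Set.MapsTo ftil Y X)
    (hinv : Set.InvOn h f Y X) (hinvtil : Set.InvOn htil ftil Y X)
    (hS : h ∈ S) (hStil : htil ∈ S)
    (hEppos : 0 < Ep f)
    (hEpeq : Ep f = Ep ftil)
    (hmin : ∀ g ∈ S, EΦ h ≤ EΦ g)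
    (huniq : ∀ g ∈ S, EΦ g = EΦ h → Set.EqOn g h X)
    (hcomp : EΦ htil ≤ Ep f ^ ((p - 1) / p) * Ep ftil ^ (1 / p))
    (hident : EΦ h = Ep f) :
    Set.EqOn htil h X ∧ Set.EqOn ftil f Y := by
  have hp0 : p ≠ 0 := by linarith
  have hprod : Ep f ^ ((p - 1) / p) * Ep ftil ^ (1 / p) = Ep f := by
    rw [← hEpeq, ← Real.rpow_add hEppos]
    have : (p - 1) / p + 1 / p = 1 := by field_simp; ring
    rw [this, Real.rpow_one]
  have hle : EΦ htil ≤ EΦ h := by rw [hident]; linarith [hcomp, hprod.le]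
  have heq : EΦ htil = EΦ h := le_antisymm hle (hmin _ hStil)
  have hEq : Set.EqOn htil h X := huniq _ hStil heq
  refine ⟨hEq, fun y hy => ?_⟩
  have hx : ftil y ∈ X := hftilmaps hy
  have h1 : h (ftil y) = y := by rw [← hEq hx, hinvtil.1 hy]
  calc ftil y = f (h (ftil y)) := (hinv.2 hx).symm
    _ = f y := by rw [h1]
end
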